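/- With B = J_k(β), β ≠ 0, and a = e₁, the linear span (over ℝ) of the abstract rules of the k memory units, viewed as sequences, equals the space of all sequences of the form {p(j)·β^j}_{j=0}^∞ where p ranges over real polynomials of degree at most k-1. -/

import Mathlib

open Matrix

/-- The `k × k` Jordan block with eigenvalue `β`. -/
def jordanBlock (k : ℕ) (β : ℝ) : Matrix (Fin k) (Fin k) ℝ :=
  Matrix.of fun i j => if (i : ℕ) = (j : ℕ) then β else if (j : ℕ) = (i : ℕ) + 1 then 1 else 0

lemma jordanBlock_split (k : ℕ) (β : ℝ) :
    jordanBlock k β = β • (1 : Matrix (Fin k) (Fin k) ℝ) + jordanBlock k 0 := by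
  ext i j
  simp only [jordanBlock, Matrix.add_apply, Matrix.smul_apply, Matrix.one_apply, Matrix.of_apply,
    smul_eq_mul]
  by_cases h : (i : ℕ) = (j : ℕ)
  · rw [if_pos h, if_pos (Fin.ext h), if_pos h]
    ring
  · rw [if_neg h, if_neg (fun hh : i = j => h (congrArg Fin.val hh)), if_neg h]
    ring

lemma nil_pow_apply (k : ℕ) : ∀ (m : ℕ) (i i' : Fin k),
    ((jordanBlock k 0) ^ m) i i' = if (i' : ℕ) = (i : ℕ) + m then 1 else 0 := by
  intro m
  induction m with
  | zero =>
    intro i i'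
    simp only [pow_zero, Matrix.one_apply, Nat.add_zero]
    by_cases h : i = i'
    · simp [h]
    · rw [if_neg h, if_neg (fun hh => h (Fin.ext hh.symm))]
  | succ m ih =>
    intro i i'
    rw [pow_succ, Matrix.mul_apply]
    have hN : ∀ x : Fin k, jordanBlock k 0 x i' = if (i' : ℕ) = (x : ℕ) + 1 then 1 else 0 := by
      intro x
      simp only [jordanBlock, Matrix.of_apply]
      split_ifs with h1 h2 h3 <;> first | rfl | omega
    simp only [ih, hN]
    by_cases h : (i' : ℕ) = (i : ℕ) + m + 1
    · have hlt : (i : ℕ) + m < k := by omega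
      rw [Finset.sum_eq_single (⟨(i : ℕ) + m, hlt⟩ : Fin k)]
      · rw [if_pos rfl, if_pos (by simpa using h), one_mul, if_pos (by omega)]
      · intro x _ hx
        rw [if_neg (fun hh => hx (Fin.ext hh)), zero_mul]
      · simp
    · rw [Finset.sum_eq_zero, if_neg (by omega)]
      intro x _
      split_ifs with h1 h2 <;> first | omega | simp

lemma natCast_matrix_eq (n k : ℕ) :
    ((n : ℕ) : Matrix (Fin k) (Fin k) ℝ) = ((n : ℝ)) • (1 : Matrix (Fin k) (Fin k) ℝ) := by
  ext i j
  rw [← Matrix.diagonal_natCast]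
  by_cases h : i = j <;> simp [Matrix.diagonal_apply, Matrix.one_apply, h]

lemma jordan_pow_first_row (k : ℕ) (hk : 0 < k) (β : ℝ) (j : ℕ) (i : Fin k) :
    ((jordanBlock k β) ^ j) ⟨0, hk⟩ i = (j.choose (i : ℕ)) * β ^ (j - (i : ℕ)) := by
  have hcomm : Commute (β • (1 : Matrix (Fin k) (Fin k) ℝ)) (jordanBlock k 0) :=
    (Commute.one_left _).smul_left β
  rw [jordanBlock_split, hcomm.add_pow]
  have hterm : ∀ m : ℕ, (β • (1 : Matrix (Fin k) (Fin k) ℝ)) ^ m * (jordanBlock k 0) ^ (j - m) *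
      ((j.choose m : ℕ) : Matrix (Fin k) (Fin k) ℝ)
      = (β ^ m * (j.choose m : ℝ)) • (jordanBlock k 0) ^ (j - m) := by
    intro m
    rw [natCast_matrix_eq, smul_pow, one_pow, smul_mul_assoc, smul_mul_assoc, one_mul,
      mul_smul_comm, mul_one, smul_smul]
  simp only [hterm, Matrix.sum_apply, Matrix.smul_apply, nil_pow_apply, smul_eq_mul]
  by_cases hij : (i : ℕ) ≤ j
  · rw [Finset.sum_eq_single_of_mem (j - (i : ℕ)) (Finset.mem_range.mpr (by omega))]
    · rw [if_pos (by omega : (i : ℕ) = (0 : ℕ) + (j - (j - (i : ℕ)))), mul_one,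
        Nat.choose_symm hij]
      ring
    · intro m hm hne
      rw [if_neg (by simp only [Finset.mem_range] at hm; omega), mul_zero]
  · rw [Finset.sum_eq_zero, Nat.choose_eq_zero_of_lt (by omega)]
    · simp
    · intro m hm
      rw [if_neg (by simp only [Finset.mem_range] at hm; omega), mul_zero]

open Polynomial in
lemma mem_span_descPochhammer (k : ℕ) (hk : 0 < k) :
    ∀ (n : ℕ) (p : Polynomial ℝ), p.natDegree ≤ n → p.degree < (k : ℕ) →
      p ∈ Submodule.span ℝ (Set.range fun i : Fin k => descPochhammer ℝ (i : ℕ)) := by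
  intro n
  induction n with
  | zero =>
    intro p hdeg _
    by_cases hp : p = 0
    · simp [hp]
    · obtain ⟨a, ha⟩ := Polynomial.natDegree_eq_zero.mp (Nat.le_zero.mp hdeg)
      have heq : p = a • descPochhammer ℝ ((⟨0, hk⟩ : Fin k) : ℕ) := by
        rw [show ((⟨0, hk⟩ : Fin k) : ℕ) = 0 from rfl, descPochhammer_zero,
          Polynomial.smul_eq_C_mul, mul_one, ha]
      rw [heq]
      exact Submodule.smul_mem _ _ (Submodule.subset_span ⟨⟨0, hk⟩, rfl⟩)
  | succ n ih =>
    intro p hdeg hdegk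
    by_cases hp : p = 0
    · simp [hp]
    set d := p.natDegree with hd
    have hdk : d < k := by
      have := (Polynomial.natDegree_lt_iff_degree_lt hp).mpr hdegk
      omega
    have hmono := monic_descPochhammer ℝ d
    have hdphdeg : (descPochhammer ℝ d).natDegree = d := descPochhammer_natDegree (R := ℝ) d
    set c := p.leadingCoeff with hc
    have hc0 : c ≠ 0 := Polynomial.leadingCoeff_ne_zero.mpr hp
    set q := p - c • descPochhammer ℝ d with hq
    have hmem_d : descPochhammer ℝ d ∈
        Submodule.span ℝ (Set.range fun i : Fin k => descPochhammer ℝ (i : ℕ)) :=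
      Submodule.subset_span ⟨⟨d, hdk⟩, rfl⟩
    have hpq : p = q + c • descPochhammer ℝ d := by rw [hq, sub_add_cancel]
    by_cases hq0 : q = 0
    · rw [hpq, hq0, zero_add]
      exact Submodule.smul_mem _ _ hmem_d
    · have hlt : q.degree < p.degree := by
        apply Polynomial.degree_sub_lt ?_ hp ?_
        · rw [Polynomial.smul_eq_C_mul, Polynomial.degree_C_mul hc0,
            Polynomial.degree_eq_natDegree hp, Polynomial.degree_eq_natDegree hmono.ne_zero,
            hdphdeg]
        · rw [Polynomial.smul_eq_C_mul, Polynomial.leadingCoeff_mul,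
            Polynomial.leadingCoeff_C, hmono.leadingCoeff, mul_one]
      have hqn : q.natDegree ≤ n := by
        have := Polynomial.natDegree_lt_natDegree hq0 hlt
        omega
      have hqk : q.degree < (k : ℕ) := lt_trans hlt hdegk
      rw [hpq]
      exact Submodule.add_mem _ (ih q hqn hqk) (Submodule.smul_mem _ _ hmem_d)

noncomputable def polyExpMap (β : ℝ) : Polynomial ℝ →ₗ[ℝ] (ℕ → ℝ) where
  toFun p := fun j => p.eval (j : ℝ) * β ^ j
  map_add' p q := by funext j; simp [add_mul]
  map_smul' c p := by funext j; simp [mul_assoc]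


/-- For `B = J_k(β)` with `β ≠ 0` and `a = e₁`, the real linear span of the
abstract rules of the `k` memory units (viewed as sequences `ℕ → ℝ`) equals the set of
sequences of the form `j ↦ p(j) · β^j` with `p` a real polynomial of degree `≤ k - 1`. -/
theorem jordan_span_eq_poly (k : ℕ) (hk : 0 < k) (β : ℝ) (hβ : β ≠ 0) :
    ∀ f : ℕ → ℝ,
      f ∈ Submodule.span ℝ
        {r : ℕ → ℝ | ∃ i : Fin k,
          r = fun j => Matrix.vecMul (Pi.single (⟨0, hk⟩ : Fin k) (1 : ℝ))
            (jordanBlock k β ^ j) i} ↔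
      ∃ p : Polynomial ℝ, p.natDegree ≤ k - 1 ∧ f = fun j : ℕ => p.eval (j : ℝ) * β ^ j := by
  intro f
  set L := polyExpMap β with hL
  have hrule : ∀ i : Fin k,
      (fun j => Matrix.vecMul (Pi.single (⟨0, hk⟩ : Fin k) (1 : ℝ)) (jordanBlock k β ^ j) i)
        = fun j => ((j.choose (i : ℕ) : ℝ) * β ^ (j - (i : ℕ))) := by
    intro i
    funext j
    rw [Matrix.single_one_vecMul]
    exact jordan_pow_first_row k hk β j i
  have hfac : ∀ i : Fin k, (((i : ℕ).factorial : ℝ)) ≠ 0 := by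
    intro i
    exact_mod_cast (Nat.factorial_pos _).ne'
  have hsub1 : {r : ℕ → ℝ | ∃ i : Fin k,
      r = fun j => Matrix.vecMul (Pi.single (⟨0, hk⟩ : Fin k) (1 : ℝ))
        (jordanBlock k β ^ j) i} ⊆ (Submodule.map L (Polynomial.degreeLT ℝ k) : Set (ℕ → ℝ)) := by
    rintro r ⟨i, rfl⟩
    refine ⟨((β ^ (i : ℕ) * ((i : ℕ).factorial : ℝ))⁻¹) • descPochhammer ℝ (i : ℕ), ?_, ?_⟩
    · rw [SetLike.mem_coe, Polynomial.mem_degreeLT]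
      refine lt_of_le_of_lt (Polynomial.degree_smul_le _ _) ?_
      rw [Polynomial.degree_eq_natDegree (monic_descPochhammer ℝ _).ne_zero,
        descPochhammer_natDegree (R := ℝ)]
      exact_mod_cast i.isLt
    · rw [hrule i]
      funext j
      show (_ • descPochhammer ℝ (i : ℕ)).eval (j : ℝ) * β ^ j = _
      rw [Polynomial.eval_smul, smul_eq_mul, descPochhammer_eval_eq_descFactorial,
        Nat.descFactorial_eq_factorial_mul_choose]
      push_cast
      by_cases hij : (i : ℕ) ≤ j
      · rw [pow_sub₀ β hβ hij]
        field_simp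
      · rw [Nat.choose_eq_zero_of_lt (by omega)]
        simp
  have hsub2 : Submodule.map L (Polynomial.degreeLT ℝ k) ≤ Submodule.span ℝ
      {r : ℕ → ℝ | ∃ i : Fin k,
        r = fun j => Matrix.vecMul (Pi.single (⟨0, hk⟩ : Fin k) (1 : ℝ))
          (jordanBlock k β ^ j) i} := by
    rintro g ⟨p, hp, rfl⟩
    have hps := mem_span_descPochhammer k hk p.natDegree p le_rfl (Polynomial.mem_degreeLT.mp hp)
    have h1 : L p ∈ Submodule.map L
        (Submodule.span ℝ (Set.range fun i : Fin k => descPochhammer ℝ (i : ℕ))) :=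
      ⟨p, hps, rfl⟩
    rw [Submodule.map_span] at h1
    refine Submodule.span_le.mpr ?_ h1
    rintro g ⟨_, ⟨i, rfl⟩, rfl⟩
    have hg : L (descPochhammer ℝ (i : ℕ)) = (β ^ (i : ℕ) * ((i : ℕ).factorial : ℝ)) •
        ((fun j => ((j.choose (i : ℕ) : ℝ) * β ^ (j - (i : ℕ)))) : ℕ → ℝ) := by
      funext j
      show (descPochhammer ℝ (i : ℕ)).eval (j : ℝ) * β ^ j = _
      rw [descPochhammer_eval_eq_descFactorial, Nat.descFactorial_eq_factorial_mul_choose]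
      push_cast
      simp only [Pi.smul_apply, smul_eq_mul]
      by_cases hij : (i : ℕ) ≤ j
      · rw [(by omega : j = (i : ℕ) + (j - (i : ℕ))), pow_add]
        ring_nf
        rw [(by omega : (i : ℕ) + (j - (i : ℕ)) - (i : ℕ) = j - (i : ℕ))]
      · rw [Nat.choose_eq_zero_of_lt (by omega)]
        simp
    rw [hg, ← hrule i]
    exact Submodule.smul_mem _ _ (Submodule.subset_span ⟨i, rfl⟩)
  constructor
  · intro hf
    obtain ⟨p, hp, rfl⟩ := Submodule.span_le.mpr hsub1 hf
    refine ⟨p, ?_, rfl⟩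
    have hdeg := Polynomial.mem_degreeLT.mp hp
    by_cases hp0 : p = 0
    · simp [hp0]
    · have := (Polynomial.natDegree_lt_iff_degree_lt hp0).mpr hdeg
      omega
  · rintro ⟨p, hdeg, rfl⟩
    apply hsub2
    refine ⟨p, ?_, rfl⟩
    rw [SetLike.mem_coe, Polynomial.mem_degreeLT]
    refine lt_of_le_of_lt Polynomial.degree_le_natDegree ?_
    exact_mod_cast (by omega : p.natDegree < k)
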